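/- (Type D_n, part (i) of the proposition on fundamental weights.) Let n ≥ 4. The minimum over k ∈ {1, …, n} of ℓ_{ϖ₁}⁻(ϖ_k) equals n − 1 and is attained exactly at k = n−1 and k = n: ℓ_{ϖ₁}⁻(ϖ_{n−1}) = n − 1, realized by w = s₁ ∘ s₂ ∘ ⋯ ∘ s_{n−1} (with s_{n−1} applied first), and ℓ_{ϖ₁}⁻(ϖ_n) = n − 1, realized by w = s₁ ∘ s₂ ∘ ⋯ ∘ s_{n−2} ∘ s_n (with s_n applied first). -/

import Mathlib

open scoped RealInnerProductSpace

/-- The `j`-th simple reflection of type `Dₙ` (`1 ≤ j ≤ n`), acting on `ℝⁿ`: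
for `j < n` it transposes the coordinates numbered `j` and `j+1` (in `1`-based numbering),
and for `j = n` it sends `e_{n−1}` to `−eₙ` and `eₙ` to `−e_{n−1}`. -/
noncomputable def sD (n j : ℕ) : EuclideanSpace ℝ (Fin n) → EuclideanSpace ℝ (Fin n) :=
  fun v => WithLp.toLp 2 (fun i : Fin n =>
    if j = n then
      (if (i : ℕ) + 2 = n then -(v ⟨(n - 1) % n, Nat.mod_lt _ i.pos⟩)
       else if (i : ℕ) + 1 = n then -(v ⟨(n - 2) % n, Nat.mod_lt _ i.pos⟩)
       else v i)
    else if (i : ℕ) + 1 = j then v ⟨j % n, Nat.mod_lt _ i.pos⟩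
    else if (i : ℕ) = j then v ⟨(j - 1) % n, Nat.mod_lt _ i.pos⟩
    else v i)

/-- The composition of the simple reflections indexed by the entries of `l`
(the last entry of the list is applied first). -/
noncomputable def compD (n : ℕ) (l : List ℕ) :
    EuclideanSpace ℝ (Fin n) → EuclideanSpace ℝ (Fin n) :=
  l.foldr (fun j g => sD n j ∘ g) id

/-- The fundamental weights of type `Dₙ` (`1 ≤ j ≤ n`): `ϖⱼ = e₁ + ⋯ + eⱼ` for `j ≤ n−2`,
`ϖ_{n−1} = (e₁ + ⋯ + e_{n−1} − eₙ)/2` and `ϖₙ = (e₁ + ⋯ + e_{n−1} + eₙ)/2`. -/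
noncomputable def wtD (n j : ℕ) : EuclideanSpace ℝ (Fin n) :=
  if j + 1 = n then WithLp.toLp 2 (fun i : Fin n => if (i : ℕ) + 1 = n then -(1 / 2 : ℝ) else 1 / 2)
  else if j = n then WithLp.toLp 2 (fun _ : Fin n => (1 / 2 : ℝ))
  else WithLp.toLp 2 (fun i : Fin n => if (i : ℕ) < j then (1 : ℝ) else 0)

/-- cost potential -/
noncomputable def costD (n i : ℕ) (x : ℝ) : ℕ :=
  if x < 0 then i else if 0 < x then (if i + 1 = n then n - 1 else 2*n - 2 - i) else 2*n

lemma inner_e1 (n : ℕ) (hn : 4 ≤ n) (v : EuclideanSpace ℝ (Fin n)) :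
    ⟪v, wtD n 1⟫ = v ⟨0, by omega⟩ := by
  have h1 : ¬ (1 + 1 = n) := by omega
  have h2 : ¬ (1 = n) := by omega
  rw [PiLp.inner_apply]
  simp only [wtD, if_neg h1, if_neg h2, RCLike.inner_apply, conj_trivial]
  rw [Finset.sum_eq_single (⟨0, by omega⟩ : Fin n)]
  · simp
  · intro b _ hb
    have : ¬ ((b:ℕ) < 1) := by simp [Fin.ext_iff] at hb; omega
    simp [this]
  · simp

lemma costD_mono (n a b : ℕ) (x : ℝ) (hab : a ≤ b + 1) (hba : b ≤ a + 1) :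
    costD n a x ≤ costD n b x + 1 := by
  unfold costD
  split_ifs <;> omega

lemma costD_negswap₁ (n : ℕ) (hn : 4 ≤ n) (x : ℝ) :
    costD n (n - 1) x ≤ costD n (n - 2) (-x) + 1 := by
  rcases lt_trichotomy x 0 with h | rfl | h
  · have h1 : ¬ (-x < 0) := by linarith
    have h2 : (0:ℝ) < -x := by linarith
    simp only [costD, if_pos h, if_neg h1, if_pos h2]
    split_ifs <;> omega
  · simp only [costD, neg_zero, lt_irrefl, if_neg (lt_irrefl (0:ℝ))]
    norm_num
  · have h1 : -x < 0 := by linarith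
    have h2 : ¬ (x < 0) := by linarith
    simp only [costD, if_neg h2, if_pos h, if_pos h1]
    split_ifs <;> omega

lemma costD_negswap₂ (n : ℕ) (hn : 4 ≤ n) (x : ℝ) :
    costD n (n - 2) x ≤ costD n (n - 1) (-x) + 1 := by
  rcases lt_trichotomy x 0 with h | rfl | h
  · have h1 : ¬ (-x < 0) := by linarith
    have h2 : (0:ℝ) < -x := by linarith
    simp only [costD, if_pos h, if_neg h1, if_pos h2]
    split_ifs <;> omega
  · simp only [costD, neg_zero, lt_irrefl, if_neg (lt_irrefl (0:ℝ))]
    norm_num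
  · have h1 : -x < 0 := by linarith
    have h2 : ¬ (x < 0) := by linarith
    simp only [costD, if_neg h2, if_pos h, if_pos h1]
    split_ifs <;> omega

lemma sD_step (n : ℕ) (hn : 4 ≤ n) (j : ℕ) (hj1 : 1 ≤ j) (hj2 : j ≤ n)
    (v : EuclideanSpace ℝ (Fin n)) (i : Fin n) :
    ∃ i' : Fin n, costD n i' (v i') ≤ costD n i (sD n j v i) + 1 := by
  by_cases hjn : j = n
  · by_cases h2 : (i : ℕ) + 2 = n
    · refine ⟨⟨n - 1, by omega⟩, ?_⟩
      have hs : sD n j v i = -(v ⟨n - 1, by omega⟩) := by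
        simp only [sD, if_pos hjn, if_pos h2]
        congr 1
        exact congrArg v (Fin.ext (Nat.mod_eq_of_lt (by omega)))
      rw [hs]
      have hi : (i : ℕ) = n - 2 := by omega
      simpa [hi] using costD_negswap₁ n hn (v ⟨n - 1, by omega⟩)
    · by_cases h1 : (i : ℕ) + 1 = n
      · refine ⟨⟨n - 2, by omega⟩, ?_⟩
        have hs : sD n j v i = -(v ⟨n - 2, by omega⟩) := by
          simp only [sD, if_pos hjn, if_neg h2, if_pos h1]
          congr 1
          exact congrArg v (Fin.ext (Nat.mod_eq_of_lt (by omega)))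
        rw [hs]
        have hi : (i : ℕ) = n - 1 := by omega
        simpa [hi] using costD_negswap₂ n hn (v ⟨n - 2, by omega⟩)
      · refine ⟨i, ?_⟩
        have hs : sD n j v i = v i := by simp only [sD, if_pos hjn, if_neg h2, if_neg h1]
        rw [hs]; omega
  · have hjlt : j < n := by omega
    by_cases hA : (i : ℕ) + 1 = j
    · refine ⟨⟨j, hjlt⟩, ?_⟩
      have hs : sD n j v i = v ⟨j, hjlt⟩ := by
        simp only [sD, if_neg hjn, if_pos hA]
        exact congrArg v (Fin.ext (Nat.mod_eq_of_lt hjlt))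
      rw [hs]
      exact costD_mono n j i _ (by omega) (by omega)
    · by_cases hB : (i : ℕ) = j
      · refine ⟨⟨j - 1, by omega⟩, ?_⟩
        have hs : sD n j v i = v ⟨j - 1, by omega⟩ := by
          simp only [sD, if_neg hjn, if_neg hA, if_pos hB]
          exact congrArg v (Fin.ext (Nat.mod_eq_of_lt (by omega)))
        rw [hs]
        exact costD_mono n (j - 1) i _ (by omega) (by omega)
      · refine ⟨i, ?_⟩
        have hs : sD n j v i = v i := by simp only [sD, if_neg hjn, if_neg hA, if_neg hB]
        rw [hs]; omega

lemma compD_bound (n : ℕ) (hn : 4 ≤ n) (v : EuclideanSpace ℝ (Fin n)) (B : ℕ)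
    (hv : ∀ i : Fin n, B ≤ costD n i (v i)) :
    ∀ l : List ℕ, (∀ m ∈ l, 1 ≤ m ∧ m ≤ n) →
      ∀ i : Fin n, B ≤ costD n i (compD n l v i) + l.length := by
  intro l
  induction l with
  | nil => intro _ i; simpa [compD] using hv i
  | cons j t ih =>
    intro h i
    have hj := h j (by simp)
    obtain ⟨i', hi'⟩ := sD_step n hn j hj.1 hj.2 (compD n t v) i
    have hih := ih (fun m hm => h m (by simp [hm])) i'
    have hc : compD n (j :: t) v i = sD n j (compD n t v) i := rfl
    rw [hc, List.length_cons]
    omega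

lemma length_bound (n : ℕ) (hn : 4 ≤ n) (v : EuclideanSpace ℝ (Fin n)) (B : ℕ)
    (hv : ∀ i : Fin n, B ≤ costD n i (v i)) (l : List ℕ)
    (hl : ∀ m ∈ l, 1 ≤ m ∧ m ≤ n) (hneg : ⟪compD n l v, wtD n 1⟫ < 0) :
    B ≤ l.length := by
  rw [inner_e1 n hn] at hneg
  have := compD_bound n hn v B hv l hl ⟨0, by omega⟩
  have hc : costD n ((⟨0, by omega⟩ : Fin n) : ℕ) (compD n l v ⟨0, by omega⟩) = 0 := by
    simp only [costD, if_pos hneg]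
  omega

lemma cost_wt_small (n k : ℕ) (hn : 4 ≤ n) (hk1 : 1 ≤ k) (hk : k ≤ n - 2) (i : Fin n) :
    n ≤ costD n i (wtD n k i) := by
  have h1 : ¬ (k + 1 = n) := by omega
  have h2 : ¬ (k = n) := by omega
  simp only [wtD, if_neg h1, if_neg h2]
  by_cases hik : (i : ℕ) < k
  · have := i.isLt
    simp only [if_pos hik, costD]
    norm_num
    split_ifs <;> omega
  · simp only [if_neg hik, costD]
    norm_num
    omega

lemma cost_wt_pen (n : ℕ) (hn : 4 ≤ n) (i : Fin n) :
    n - 1 ≤ costD n i (wtD n (n - 1) i) := by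
  have h1 : n - 1 + 1 = n := by omega
  simp only [wtD, if_pos h1]
  have := i.isLt
  by_cases hi : (i : ℕ) + 1 = n
  · simp only [if_pos hi, costD]
    norm_num
    omega
  · simp only [if_neg hi, costD]
    norm_num
    first | omega | (split_ifs <;> omega)

lemma cost_wt_last (n : ℕ) (hn : 4 ≤ n) (i : Fin n) :
    n - 1 ≤ costD n i (wtD n n i) := by
  have h1 : ¬ (n + 1 = n) := by omega
  simp only [wtD, if_neg h1, if_pos rfl]
  have := i.isLt
  simp only [costD]
  norm_num
  split_ifs <;> omega

lemma compD_eval (n : ℕ) : ∀ (b a : ℕ) (h : a + b < n) (v : EuclideanSpace ℝ (Fin n)),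
    compD n ((List.range b).map (fun x => x + a + 1)) v ⟨a, by omega⟩ = v ⟨a + b, h⟩ := by
  intro b
  induction b with
  | zero => intro a h v; simp [compD]
  | succ b ih =>
    intro a h v
    rw [List.range_succ_eq_map, List.map_cons, List.map_map]
    have hf : ((fun x => x + a + 1) ∘ (fun x => x + 1)) = (fun x => x + (a + 1) + 1) := by
      funext x; simp [Function.comp]; omega
    rw [hf]
    have hc : compD n ((0 + a + 1) :: (List.range b).map (fun x => x + (a + 1) + 1)) v
        ⟨a, by omega⟩
        = sD n (0 + a + 1) (compD n ((List.range b).map (fun x => x + (a + 1) + 1)) v)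
          ⟨a, by omega⟩ := rfl
    rw [hc]
    have hjn : ¬ (0 + a + 1 = n) := by omega
    have hA : a + 1 = 0 + a + 1 := by omega
    have hs : sD n (0 + a + 1) (compD n ((List.range b).map (fun x => x + (a + 1) + 1)) v)
        ⟨a, by omega⟩
        = compD n ((List.range b).map (fun x => x + (a + 1) + 1)) v ⟨a + 1, by omega⟩ := by
      simp only [sD, if_neg hjn, if_pos hA]
      exact congrArg (compD n ((List.range b).map (fun x => x + (a + 1) + 1)) v)
        (Fin.ext ((Nat.mod_eq_of_lt (show 0 + a + 1 < n by omega)).trans (show 0 + a + 1 = a + 1 by omega)))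
    rw [hs, ih (a + 1) (by omega) v]
    exact congrArg v (Fin.ext (by simp; omega))

lemma compD_append (n : ℕ) (l₁ l₂ : List ℕ) :
    compD n (l₁ ++ l₂) = compD n l₁ ∘ compD n l₂ := by
  induction l₁ with
  | nil => rfl
  | cons j t ih =>
    show sD n j ∘ compD n (t ++ l₂) = (sD n j ∘ compD n t) ∘ compD n l₂
    rw [ih]; rfl

lemma wtD_last_apply (n : ℕ) (hn : 4 ≤ n) (i : Fin n) : wtD n n i = 1/2 := by
  simp [wtD, show ¬ (n + 1 = n) by omega]

lemma wit1 (n : ℕ) (hn : 4 ≤ n) :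
    ⟪compD n ((List.range (n - 1)).map (· + 1)) (wtD n (n - 1)), wtD n 1⟫ < 0 := by
  rw [inner_e1 n hn]
  have hmap : (List.range (n - 1)).map (· + 1)
      = (List.range (n - 1)).map (fun x => x + 0 + 1) := by simp
  rw [hmap, compD_eval n (n - 1) 0 (by omega)]
  have h1 : n - 1 + 1 = n := by omega
  have h2 : (0:ℕ) + (n - 1) + 1 = n := by omega
  simp only [wtD, if_pos h1]
  rw [if_pos h2]
  norm_num

lemma wit2 (n : ℕ) (hn : 4 ≤ n) :
    ⟪compD n (((List.range (n - 2)).map (· + 1)) ++ [n]) (wtD n n), wtD n 1⟫ < 0 := by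
  rw [inner_e1 n hn, compD_append]
  have hmap : (List.range (n - 2)).map (· + 1)
      = (List.range (n - 2)).map (fun x => x + 0 + 1) := by simp
  have hc1 : compD n [n] (wtD n n) = sD n n (wtD n n) := rfl
  simp only [Function.comp_apply, hc1, hmap]
  rw [compD_eval n (n - 2) 0 (by omega)]
  have h2 : (0:ℕ) + (n - 2) + 2 = n := by omega
  have hs : sD n n (wtD n n) ⟨0 + (n - 2), by omega⟩
      = -(wtD n n ⟨(n - 1) % n, Nat.mod_lt _ (by omega)⟩) := by
    simp only [sD, if_pos rfl, if_pos h2, if_true]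
  rw [hs, wtD_last_apply n hn]
  norm_num

theorem statement13 (n : ℕ) (hn : 4 ≤ n) :
    (∀ k, 1 ≤ k → k ≤ n → ∀ l : List ℕ, (∀ m ∈ l, 1 ≤ m ∧ m ≤ n) →
        ⟪compD n l (wtD n k), wtD n 1⟫ < 0 → n - 1 ≤ l.length) ∧
    IsLeast {k : ℕ | ∃ l : List ℕ, (∀ m ∈ l, 1 ≤ m ∧ m ≤ n) ∧ l.length = k ∧
        ⟪compD n l (wtD n (n - 1)), wtD n 1⟫ < 0} (n - 1) ∧
    IsLeast {k : ℕ | ∃ l : List ℕ, (∀ m ∈ l, 1 ≤ m ∧ m ≤ n) ∧ l.length = k ∧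
        ⟪compD n l (wtD n n), wtD n 1⟫ < 0} (n - 1) ∧
    (∀ k, 1 ≤ k → k ≤ n → k ≠ n - 1 → k ≠ n →
      ∀ l : List ℕ, (∀ m ∈ l, 1 ≤ m ∧ m ≤ n) →
        ⟪compD n l (wtD n k), wtD n 1⟫ < 0 → n - 1 < l.length) ∧
    ⟪compD n ((List.range (n - 1)).map (· + 1)) (wtD n (n - 1)), wtD n 1⟫ < 0 ∧
    ⟪compD n (((List.range (n - 2)).map (· + 1)) ++ [n]) (wtD n n), wtD n 1⟫ < 0 := by
  refine ⟨?_, ⟨⟨_, ?_, ?_, wit1 n hn⟩, ?_⟩, ⟨⟨_, ?_, ?_, wit2 n hn⟩, ?_⟩, ?_, wit1 n hn, wit2 n hn⟩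
  · -- part 1
    intro k hk1 hk2 l hl hneg
    rcases lt_or_ge k (n - 1) with hk | hk
    · have := length_bound n hn (wtD n k) n
        (cost_wt_small n k hn hk1 (by omega)) l hl hneg
      omega
    · rcases Nat.eq_or_lt_of_le hk with hk' | hk'
      · rw [← hk'] at hneg
        exact length_bound n hn _ (n - 1) (cost_wt_pen n hn) l hl hneg
      · have hk'' : k = n := by omega
        rw [hk''] at hneg
        exact length_bound n hn _ (n - 1) (cost_wt_last n hn) l hl hneg
  · intro m hm; simp only [List.mem_map, List.mem_range] at hm; omega
  · simp
  · rintro k ⟨l, hl, hlen, hneg⟩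
    have := length_bound n hn _ (n - 1) (cost_wt_pen n hn) l hl hneg
    omega
  · intro m hm
    simp only [List.mem_append, List.mem_map, List.mem_range, List.mem_singleton] at hm
    rcases hm with ⟨x, hx, rfl⟩ | rfl <;> omega
  · simp; omega
  · rintro k ⟨l, hl, hlen, hneg⟩
    have := length_bound n hn _ (n - 1) (cost_wt_last n hn) l hl hneg
    omega
  · intro k hk1 hk2 hkp hkn l hl hneg
    have := length_bound n hn (wtD n k) n
      (cost_wt_small n k hn hk1 (by omega)) l hl hneg
    omega
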